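/- For a transversely isotropic constant elasticity tensor with parameters (a,b,c,d,e), the displacement field u⁽⁸⁾(x) = (0, 0, dx² − ez²) is a solution of the elasticity system ∇·(c ε(u⁽⁸⁾)) = 0 on ℝ³. -/

import Mathlib

open scoped Matrix

/-- Partial derivative `∂ᵢ g` of a scalar function on ℝ³. -/
noncomputable def pd (i : Fin 3) (g : (Fin 3 → ℝ) → ℝ) (x : Fin 3 → ℝ) : ℝ :=
  fderiv ℝ g x (Pi.single i 1)

/-- Strain tensor `ε(u)_{ij} = (1/2)(∂ᵢ u_j + ∂_j u_i)`. -/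
noncomputable def strain (u : (Fin 3 → ℝ) → Fin 3 → ℝ) (x : Fin 3 → ℝ)
    (i j : Fin 3) : ℝ :=
  (pd i (fun y => u y j) x + pd j (fun y => u y i) x) / 2

/-- Voigt vector `(ε₁₁, ε₂₂, ε₃₃, 2ε₂₃, 2ε₃₁, 2ε₁₂)`. -/
noncomputable def voigtVec (e : Fin 3 → Fin 3 → ℝ) : Fin 6 → ℝ :=
  ![e 0 0, e 1 1, e 2 2, 2 * e 1 2, 2 * e 2 0, 2 * e 0 1]

/-- The 3×6 Voigt divergence operator. -/
noncomputable def voigtDiv (F : (Fin 3 → ℝ) → Fin 6 → ℝ) (x : Fin 3 → ℝ) : Fin 3 → ℝ :=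
  ![pd 0 (fun y => F y 0) x + pd 2 (fun y => F y 4) x + pd 1 (fun y => F y 5) x,
    pd 1 (fun y => F y 1) x + pd 2 (fun y => F y 3) x + pd 0 (fun y => F y 5) x,
    pd 2 (fun y => F y 2) x + pd 1 (fun y => F y 3) x + pd 0 (fun y => F y 4) x]

/-- The transversely isotropic Voigt matrix with parameters `(a,b,c,d,e)`. -/
noncomputable def TImat (a b c d e : ℝ) : Matrix (Fin 6) (Fin 6) ℝ :=
  !![a, b, c, 0, 0, 0;
     b, a, c, 0, 0, 0;
     c, c, d, 0, 0, 0;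
     0, 0, 0, e, 0, 0;
     0, 0, 0, 0, e, 0;
     0, 0, 0, 0, 0, (a - b) / 2]

/-- The displacement field `u⁽⁸⁾(x) = (0, 0, dx² − ez²)`. -/
noncomputable def uEight (d e : ℝ) (x : Fin 3 → ℝ) : Fin 3 → ℝ :=
  ![0, 0, d * x 0 ^ 2 - e * x 2 ^ 2]

lemma cons_val_five {α : Type*} {m : ℕ} (x : α) (u : Fin (m + 5) → α) :
    Matrix.vecCons x u 5
      = Matrix.vecHead (Matrix.vecTail (Matrix.vecTail (Matrix.vecTail (Matrix.vecTail u)))) :=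
  rfl

noncomputable def projR (j : Fin 3) : (Fin 3 → ℝ) →L[ℝ] ℝ :=
  ContinuousLinearMap.proj j

lemma hasF_proj (j : Fin 3) (x : Fin 3 → ℝ) :
    HasFDerivAt (fun y : Fin 3 → ℝ => y j) (projR j) x :=
  (projR j).hasFDerivAt

lemma pd_lin (i j : Fin 3) (k : ℝ) (x : Fin 3 → ℝ) :
    pd i (fun y => k * y j) x = k * (Pi.single i 1 : Fin 3 → ℝ) j := by
  have h := ((hasF_proj j x).const_mul k).fderiv
  simp [pd, h, projR]

lemma pd_const (i : Fin 3) (k : ℝ) (x : Fin 3 → ℝ) :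
    pd i (fun _ => k) x = 0 := by
  simp [pd, fderiv_const]

lemma pd_quad (i : Fin 3) (d e : ℝ) (x : Fin 3 → ℝ) :
    pd i (fun y => d * y 0 ^ 2 - e * y 2 ^ 2) x
      = 2 * d * x 0 * (Pi.single i 1 : Fin 3 → ℝ) 0
        - 2 * e * x 2 * (Pi.single i 1 : Fin 3 → ℝ) 2 := by
  have hfun : (fun y : Fin 3 → ℝ => d * y 0 ^ 2 - e * y 2 ^ 2)
      = fun y : Fin 3 → ℝ => d * (y 0 * y 0) - e * (y 2 * y 2) := by
    funext y; ring
  have h := (((((hasF_proj 0 x).mul (hasF_proj 0 x))).const_mul d).sub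
      ((((hasF_proj 2 x).mul (hasF_proj 2 x))).const_mul e)).fderiv
  rw [pd, hfun, show fderiv ℝ (fun y : Fin 3 → ℝ => d * (y 0 * y 0) - e * (y 2 * y 2)) x = _ from h]
  simp [projR]
  ring

lemma strain_val (d e : ℝ) (y : Fin 3 → ℝ) :
    strain (uEight d e) y = fun i j =>
      !![0, 0, d * y 0; 0, 0, 0; d * y 0, 0, -(2*e) * y 2] i j := by
  funext i j
  have h0 : ∀ j : Fin 3, (fun y' => uEight d e y' j) =
      (fun y' : Fin 3 → ℝ => ![(0:ℝ), 0, d * y' 0 ^ 2 - e * y' 2 ^ 2] j) := by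
    intro j; rfl
  fin_cases i <;> fin_cases j <;>
    simp [strain, h0, pd_const, pd_quad, Pi.single_apply, Matrix.vecHead,
      Matrix.vecTail] <;> ring

lemma sigma_val (a b c d e : ℝ) (y : Fin 3 → ℝ) :
    (TImat a b c d e *ᵥ voigtVec (strain (uEight d e) y)) =
      ![-2*c*e * y 2, -2*c*e * y 2, -2*d*e * y 2, 0, 2*d*e * y 0, 0] := by
  funext k
  fin_cases k <;>
    simp [TImat, voigtVec, strain_val, Matrix.mulVec, dotProduct,
      Fin.sum_univ_six, cons_val_five, Matrix.vecHead, Matrix.vecTail] <;> ring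

/-- `u⁽⁸⁾` solves the transversely isotropic elasticity system on ℝ³. -/
theorem stmt_17 (a b c d e : ℝ) :
    ∀ x : Fin 3 → ℝ,
      voigtDiv (fun y => TImat a b c d e *ᵥ voigtVec (strain (uEight d e) y)) x = 0 := by
  intro x
  have F0 : (fun y => (TImat a b c d e *ᵥ voigtVec (strain (uEight d e) y)) 0)
      = (fun y : Fin 3 → ℝ => -2*c*e * y 2) := by funext y; rw [sigma_val]; rfl
  have F1 : (fun y => (TImat a b c d e *ᵥ voigtVec (strain (uEight d e) y)) 1)
      = (fun y : Fin 3 → ℝ => -2*c*e * y 2) := by funext y; rw [sigma_val]; rfl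
  have F2 : (fun y => (TImat a b c d e *ᵥ voigtVec (strain (uEight d e) y)) 2)
      = (fun y : Fin 3 → ℝ => -2*d*e * y 2) := by funext y; rw [sigma_val]; rfl
  have F3 : (fun y => (TImat a b c d e *ᵥ voigtVec (strain (uEight d e) y)) 3)
      = (fun _ : Fin 3 → ℝ => (0:ℝ)) := by funext y; rw [sigma_val]; rfl
  have F4 : (fun y => (TImat a b c d e *ᵥ voigtVec (strain (uEight d e) y)) 4)
      = (fun y : Fin 3 → ℝ => 2*d*e * y 0) := by funext y; rw [sigma_val]; rfl
  have F5 : (fun y => (TImat a b c d e *ᵥ voigtVec (strain (uEight d e) y)) 5)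
      = (fun _ : Fin 3 → ℝ => (0:ℝ)) := by funext y; rw [sigma_val]; rfl
  simp only [voigtDiv, F0, F1, F2, F3, F4, F5, pd_lin, pd_const]
  funext j
  fin_cases j <;> simp [Pi.single_apply]
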